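/- Let (S, Δ) be an enriched quantum logic, let s be a state on (S, Δ), and let B ∈ Δ with s(B) = 0. Then s(A △ B) = s(A) for every A ∈ Δ. -/
import Mathlib


open scoped symmDiff

/-- An enriched quantum logic (EQL) on a (nonempty) set `S` (here: the type `α`):
a collection `Δ` of subsets containing the whole set and closed under symmetric
difference. -/
def IsEQL {α : Type*} (Δ : Set (Set α)) : Prop :=
  Set.univ ∈ Δ ∧ ∀ A ∈ Δ, ∀ B ∈ Δ, A ∆ B ∈ Δ

/-- A state on an EQL `(S, Δ)`: a `[0,1]`-valued map, normalized, additive on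
disjoint pairs of `Δ`, and subadditive with respect to symmetric difference. -/
def IsState {α : Type*} (Δ : Set (Set α)) (s : Set α → ℝ) : Prop :=
  (∀ A ∈ Δ, s A ∈ Set.Icc (0 : ℝ) 1) ∧ s Set.univ = 1 ∧
    (∀ A ∈ Δ, ∀ B ∈ Δ, A ∩ B = ∅ → s (A ∪ B) = s A + s B) ∧
    (∀ A ∈ Δ, ∀ B ∈ Δ, s (A ∆ B) ≤ s A + s B)

/-- If `s` is a state on an EQL `(S, Δ)` and `B ∈ Δ` has `s B = 0`, then
`s (A ∆ B) = s A` for every `A ∈ Δ`. -/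
theorem stmt7 {α : Type*} (Δ : Set (Set α)) (hΔ : IsEQL Δ)
    (s : Set α → ℝ) (hs : IsState Δ s)
    (B : Set α) (hB : B ∈ Δ) (hB0 : s B = 0) :
    ∀ A ∈ Δ, s (A ∆ B) = s A := by
  intro A hA
  obtain ⟨-, -, -, hsub⟩ := hs
  have h1 : s (A ∆ B) ≤ s A := by
    have := hsub A hA B hB; linarith
  have h2 : s A ≤ s (A ∆ B) := by
    have := hsub (A ∆ B) (hΔ.2 A hA B hB) B hB
    rw [symmDiff_symmDiff_cancel_right] at this
    linarith
  linarith
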